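/- The hypergeometric series J^{(i)} for ℂP^N is obtained from (1−q)Γ_q(Q) by Gamma-operators: for each i, ∏_{j≠i} [Γ_{q^{-1}}(Λ_iΛ_j^{-1} q^{Q∂_Q}) / Γ_{q^{-1}}(Λ_iΛ_j^{-1})] applied to (1−q)∑_{d≥0} Q^d/∏_{r=1}^{d}(1−q^r) equals (1−q)∑_{d≥0} Q^d / [∏_{r=1}^{d}(1−q^r) · ∏_{j≠i}∏_{r=1}^{d}(1−q^rΛ_i/Λ_j)]. -/
import Mathlib


/-- The hypergeometric series `J^{(i)}` for `ℂP^N` is obtained from `(1−q)Γ_q(Q)` by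
Gamma-operators. The operator `∏_{j≠i} Γ_{q^{-1}}(Λ_iΛ_j^{-1} q^{Q∂_Q})/Γ_{q^{-1}}(Λ_iΛ_j^{-1})`
acts diagonally, multiplying the `Q^d`-coefficient by `∏_{j≠i} Γ_j(d)/Γ_j(0)` where
`Γ_j(m) := Γ_{q^{-1}}((Λ_i/Λ_j) q^m)` satisfies the functional equation
`Γ_j(m−1) = Γ_j(m)(1 − (Λ_i/Λ_j)q^m)`. The resulting series equals
`(1−q)∑_d Q^d/[∏_{r=1}^d(1−q^r)·∏_{j≠i}∏_{r=1}^d(1−q^rΛ_i/Λ_j)]`. -/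
theorem hypergeometric_from_Gamma_operators (F : Type*) [Field F] (N : ℕ)
    (q : F) (hq0 : q ≠ 0) (Λ : Fin (N + 1) → F) (hΛ : ∀ j, Λ j ≠ 0)
    (hq : ∀ r : ℕ, 1 ≤ r → 1 - q ^ r ≠ 0)
    (i : Fin (N + 1))
    (hqΛ : ∀ j, j ≠ i → ∀ r : ℕ, 1 ≤ r → 1 - q ^ r * (Λ i / Λ j) ≠ 0)
    (Γ : Fin (N + 1) → ℤ → F)
    (hfe : ∀ j, j ≠ i → ∀ m : ℤ, Γ j (m - 1) = Γ j m * (1 - (Λ i / Λ j) * q ^ m))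
    (hΓ0 : ∀ j, Γ j 0 ≠ 0) :
    PowerSeries.mk (fun d =>
        (∏ j ∈ Finset.univ.erase i, (Γ j (d : ℤ) / Γ j 0)) *
          ((1 - q) / ∏ r ∈ Finset.range d, (1 - q ^ (r + 1))))
      = PowerSeries.mk (fun d =>
          (1 - q) / ((∏ r ∈ Finset.range d, (1 - q ^ (r + 1))) *
            ∏ j ∈ Finset.univ.erase i, ∏ r ∈ Finset.range d,
              (1 - q ^ (r + 1) * (Λ i / Λ j)))) := by
  have key : ∀ j, j ≠ i → ∀ d : ℕ,
      Γ j 0 = Γ j (d : ℤ) * ∏ r ∈ Finset.range d, (1 - q ^ (r + 1) * (Λ i / Λ j)) := by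
    intro j hj d
    induction d with
    | zero => simp
    | succ n ih =>
      have h := hfe j hj ((n : ℤ) + 1)
      simp only [add_sub_cancel_right] at h
      have hcast : ((n + 1 : ℕ) : ℤ) = (n : ℤ) + 1 := by push_cast; ring
      have hq' : (q : F) ^ ((n : ℤ) + 1) = q ^ (n + 1) := by
        rw [← zpow_natCast]; push_cast; ring_nf
      rw [Finset.prod_range_succ, hcast, ← mul_assoc, ih, h, hq']
      ring
  ext d
  simp only [PowerSeries.coeff_mk]
  have hprodne : ∀ j, j ≠ i → (∏ r ∈ Finset.range d, (1 - q ^ (r + 1) * (Λ i / Λ j))) ≠ 0 := by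
    intro j hj
    exact Finset.prod_ne_zero_iff.mpr fun r _ => hqΛ j hj (r + 1) (Nat.le_add_left 1 r)
  have hΓd : ∀ j, j ≠ i → Γ j (d : ℤ) / Γ j 0
      = 1 / ∏ r ∈ Finset.range d, (1 - q ^ (r + 1) * (Λ i / Λ j)) := by
    intro j hj
    have h0 := key j hj d
    have hΓdne : Γ j (d : ℤ) ≠ 0 := by
      intro h; apply hΓ0 j; rw [h0, h, zero_mul]
    rw [h0, div_mul_cancel_left₀ hΓdne, one_div]
  rw [Finset.prod_congr rfl (fun j hj => hΓd j (Finset.ne_of_mem_erase hj))]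
  simp only [one_div]
  rw [Finset.prod_inv_distrib, inv_mul_eq_div, div_div]
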